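/- Fringe separation implies full separation: In a finite MDP, suppose Π_G is a nonempty set of deterministic policies such that (i) every policy in Π_G has strictly greater start-state value than every policy in the fringe Π_fringe (policies one single-state modification away from Π_G but not in Π_G), and (ii) Π_G is connected: for any π ∈ Π_G and any optimal policy π*, if π* ∉ Π_G then any improving path from π to π* crosses the fringe. Then every policy in Π_G has strictly greater start-state value than every policy not in Π_G. (It suffices to prove: some optimal policy lies in Π_G, and every π_b ∉ Π_G has an improving single-step path to an optimal policy passing through the fringe, hence V^{π_b}(s0) ≤ V^{π_f}(s0) for some fringe policy π_f.) -/

import Mathlib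

open scoped BigOperators

/-- Probability of being in state `s` at time `t`, starting from `s0` and following
the deterministic policy `π` under transition kernel `T`. -/
def visit {S A : Type} [Fintype S] [DecidableEq S]
    (T : S → A → S → ℝ) (π : S → A) (s0 : S) : ℕ → S → ℝ
  | 0, s => if s = s0 then 1 else 0
  | t + 1, s' => ∑ s, visit T π s0 t s * T s (π s) s'

/-- Value from state `s0`: V^π(s0) = Σ_t γ^t E[R(s_t, a_t)]. -/
noncomputable def value {S A : Type} [Fintype S] [DecidableEq S]
    (T : S → A → S → ℝ) (γ : ℝ) (R : S → A → ℝ) (π : S → A) (s0 : S) : ℝ :=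
  ∑' t : ℕ, γ ^ t * ∑ s, visit T π s0 t s * R s (π s)


set_option linter.unusedSectionVars false

open Filter

section MDP
variable {S A : Type} [Fintype S] [DecidableEq S]
variable {T : S → A → S → ℝ} {γ : ℝ} {R : S → A → ℝ}

lemma visit_nonneg (hT0 : ∀ s a s', 0 ≤ T s a s') (π : S → A) (x : S) :
    ∀ t s, 0 ≤ visit T π x t s := by
  intro t
  induction t with
  | zero => intro s; simp only [visit]; split <;> norm_num
  | succ t ih =>
    intro s'
    simp only [visit]
    exact Finset.sum_nonneg fun s _ => mul_nonneg (ih s) (hT0 _ _ _)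

lemma visit_sum_one (hT1 : ∀ s a, ∑ s', T s a s' = 1) (π : S → A) (x : S) :
    ∀ t, ∑ s, visit T π x t s = 1 := by
  intro t
  induction t with
  | zero => simp [visit]
  | succ t ih =>
    simp only [visit]
    rw [Finset.sum_comm]
    calc ∑ s, ∑ s', visit T π x t s * T s (π s) s'
        = ∑ s, visit T π x t s * ∑ s', T s (π s) s' := by
          simp [Finset.mul_sum]
      _ = 1 := by simp only [hT1]; simpa using ih

lemma visit_le_one (hT0 : ∀ s a s', 0 ≤ T s a s') (hT1 : ∀ s a, ∑ s', T s a s' = 1)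
    (π : S → A) (x : S) (t : ℕ) (s : S) : visit T π x t s ≤ 1 := by
  have := Finset.single_le_sum (f := fun s => visit T π x t s)
    (fun i _ => visit_nonneg hT0 π x t i) (Finset.mem_univ s)
  rw [visit_sum_one hT1 π x t] at this
  exact this

lemma expf_abs_le (hT0 : ∀ s a s', 0 ≤ T s a s') (hT1 : ∀ s a, ∑ s', T s a s' = 1)
    (π : S → A) (x : S) (t : ℕ) (f : S → ℝ) :
    |∑ s, visit T π x t s * f s| ≤ ∑ s, |f s| := by
  calc |∑ s, visit T π x t s * f s| ≤ ∑ s, |visit T π x t s * f s| :=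
        Finset.abs_sum_le_sum_abs _ _
    _ ≤ ∑ s, |f s| := by
        apply Finset.sum_le_sum
        intro s _
        rw [abs_mul, abs_of_nonneg (visit_nonneg hT0 π x t s)]
        exact mul_le_of_le_one_left (abs_nonneg _) (visit_le_one hT0 hT1 π x t s)

lemma summable_expf (hT0 : ∀ s a s', 0 ≤ T s a s') (hT1 : ∀ s a, ∑ s', T s a s' = 1)
    (hγ0 : 0 < γ) (hγ1 : γ < 1) (π : S → A) (x : S) (f : S → ℝ) :
    Summable (fun t => γ ^ t * ∑ s, visit T π x t s * f s) := by
  apply Summable.of_norm_bounded (g := fun t => γ ^ t * ∑ s, |f s|)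
    (((summable_geometric_of_lt_one hγ0.le hγ1).mul_right _))
  intro t
  rw [Real.norm_eq_abs, abs_mul, abs_pow, abs_of_nonneg hγ0.le]
  exact mul_le_mul_of_nonneg_left (expf_abs_le hT0 hT1 π x t f) (pow_nonneg hγ0.le t)

lemma tendsto_expf (hT0 : ∀ s a s', 0 ≤ T s a s') (hT1 : ∀ s a, ∑ s', T s a s' = 1)
    (hγ0 : 0 < γ) (hγ1 : γ < 1) (π : S → A) (x : S) (f : S → ℝ) :
    Tendsto (fun t => γ ^ t * ∑ s, visit T π x t s * f s) atTop (nhds 0) := by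
  apply squeeze_zero_norm (a := fun t : ℕ => γ ^ t * ∑ s, |f s|)
  · intro t
    rw [Real.norm_eq_abs, abs_mul, abs_pow, abs_of_nonneg hγ0.le]
    exact mul_le_mul_of_nonneg_left (expf_abs_le hT0 hT1 π x t f) (pow_nonneg hγ0.le t)
  · simpa using (tendsto_pow_atTop_nhds_zero_of_lt_one hγ0.le hγ1).mul_const (∑ s, |f s|)

end MDP
section MDP2
variable {S A : Type} [Fintype S] [DecidableEq S]
variable {T : S → A → S → ℝ} {γ : ℝ} {R : S → A → ℝ}

lemma swap_helper (c : S → ℝ) (f : S → S → ℝ) (b : S → ℝ) :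
    ∑ s, (∑ s1, c s1 * f s1 s) * b s = ∑ s1, c s1 * ∑ s, f s1 s * b s := by
  simp only [Finset.sum_mul, Finset.mul_sum]
  rw [Finset.sum_comm]
  exact Finset.sum_congr rfl fun s1 _ => Finset.sum_congr rfl fun s _ => by ring

noncomputable def Qf (T : S → A → S → ℝ) (γ : ℝ) (R : S → A → ℝ)
    (π : S → A) (s : S) (a : A) : ℝ :=
  R s a + γ * ∑ s', T s a s' * value T γ R π s'

lemma visit_markov (π : S → A) (x : S) :
    ∀ t s', visit T π x (t + 1) s' = ∑ s1, T x (π x) s1 * visit T π s1 t s' := by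
  intro t
  induction t with
  | zero =>
    intro s'
    simp [visit, ite_mul, mul_ite]
  | succ t ih =>
    intro s'
    simp only [visit]
    calc ∑ s, visit T π x (t + 1) s * T s (π s) s'
        = ∑ s, (∑ s1, T x (π x) s1 * visit T π s1 t s) * T s (π s) s' := by
          refine Finset.sum_congr rfl fun s _ => by rw [ih]
      _ = ∑ s1, T x (π x) s1 * ∑ s, visit T π s1 t s * T s (π s) s' :=
          swap_helper _ _ _
      _ = _ := rfl

lemma bellman (hT0 : ∀ s a s', 0 ≤ T s a s') (hT1 : ∀ s a, ∑ s', T s a s' = 1)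
    (hγ0 : 0 < γ) (hγ1 : γ < 1) (π : S → A) (x : S) :
    value T γ R π x = Qf T γ R π x (π x) := by
  have hsum := summable_expf hT0 hT1 hγ0 hγ1 π x (fun s => R s (π s))
  rw [value, Summable.tsum_eq_zero_add hsum]
  have h0 : (γ : ℝ) ^ 0 * ∑ s, visit T π x 0 s * R s (π s) = R x (π x) := by
    simp only [visit, pow_zero, one_mul, ite_mul, one_mul, zero_mul]
    rw [Finset.sum_ite_eq' Finset.univ x (fun s => R s (π s))]
    simp
  rw [h0, Qf]
  congr 1
  have key : ∀ t : ℕ, γ ^ (t + 1) * ∑ s, visit T π x (t + 1) s * R s (π s)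
      = ∑ s1, T x (π x) s1 * (γ * (γ ^ t * ∑ s, visit T π s1 t s * R s (π s))) := by
    intro t
    have : (∑ s, visit T π x (t + 1) s * R s (π s))
        = ∑ s1, T x (π x) s1 * ∑ s, visit T π s1 t s * R s (π s) := by
      calc ∑ s, visit T π x (t + 1) s * R s (π s)
          = ∑ s, (∑ s1, T x (π x) s1 * visit T π s1 t s) * R s (π s) := by
            refine Finset.sum_congr rfl fun s _ => by rw [visit_markov]
        _ = ∑ s1, T x (π x) s1 * ∑ s, visit T π s1 t s * R s (π s) :=
            swap_helper _ _ _
    rw [this, Finset.mul_sum]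
    refine Finset.sum_congr rfl fun s1 _ => by ring
  calc (∑' t : ℕ, γ ^ (t + 1) * ∑ s, visit T π x (t + 1) s * R s (π s))
      = ∑' t : ℕ, ∑ s1, T x (π x) s1 * (γ * (γ ^ t * ∑ s, visit T π s1 t s * R s (π s))) := by
        exact tsum_congr key
    _ = ∑ s1, ∑' t : ℕ, T x (π x) s1 * (γ * (γ ^ t * ∑ s, visit T π s1 t s * R s (π s))) := by
        refine Summable.tsum_finsetSum fun s1 _ => ?_
        exact (((summable_expf hT0 hT1 hγ0 hγ1 π s1 (fun s => R s (π s))).mul_left γ).mul_left _)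
    _ = γ * ∑ s', T x (π x) s' * value T γ R π s' := by
        rw [Finset.mul_sum]
        refine Finset.sum_congr rfl fun s1 _ => ?_
        rw [tsum_mul_left, tsum_mul_left, value]
        ring

end MDP2
section MDP3
variable {S A : Type} [Fintype S] [DecidableEq S]
variable {T : S → A → S → ℝ} {γ : ℝ} {R : S → A → ℝ}

lemma expf_zero (π : S → A) (x : S) (f : S → ℝ) :
    ∑ s, visit T π x 0 s * f s = f x := by
  simp [visit, ite_mul]

lemma core_id (π π' : S → A) (x : S) (t : ℕ) :
    γ ^ t * (∑ s, visit T π' x t s * R s (π' s))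
      = γ ^ t * (∑ s, visit T π' x t s * (Qf T γ R π s (π' s) - value T γ R π s))
        + (γ ^ t * ∑ s, visit T π' x t s * value T γ R π s
           - γ ^ (t + 1) * ∑ s, visit T π' x (t + 1) s * value T γ R π s) := by
  have h1 : (∑ s', visit T π' x (t + 1) s' * value T γ R π s')
      = ∑ s, visit T π' x t s * ∑ s', T s (π' s) s' * value T γ R π s' := by
    simp only [visit]
    exact swap_helper _ _ _
  rw [h1]
  simp only [Qf, pow_succ]
  rw [Finset.mul_sum, Finset.mul_sum, Finset.mul_sum, Finset.mul_sum,
    ← Finset.sum_sub_distrib, ← Finset.sum_add_distrib]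
  exact Finset.sum_congr rfl fun s _ => by ring

lemma partial_sum_id (π π' : S → A) (x : S) (n : ℕ) :
    ∑ t ∈ Finset.range n, γ ^ t * ∑ s, visit T π' x t s * R s (π' s)
      = (∑ t ∈ Finset.range n,
          γ ^ t * ∑ s, visit T π' x t s * (Qf T γ R π s (π' s) - value T γ R π s))
        + (value T γ R π x
           - γ ^ n * ∑ s, visit T π' x n s * value T γ R π s) := by
  have h := Finset.sum_congr rfl fun t (_ : t ∈ Finset.range n) => core_id (γ := γ) (T := T) (R := R) π π' x t
  rw [h, Finset.sum_add_distrib, Finset.sum_range_sub'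
    (f := fun t => γ ^ t * ∑ s, visit T π' x t s * value T γ R π s)]
  congr 2
  simp [expf_zero]

lemma Qf_le_value' (hT0 : ∀ s a s', 0 ≤ T s a s') (hT1 : ∀ s a, ∑ s', T s a s' = 1)
    (hγ0 : 0 < γ) (hγ1 : γ < 1) (π π' : S → A)
    (hadv : ∀ s, value T γ R π s ≤ Qf T γ R π s (π' s)) (x : S) :
    Qf T γ R π x (π' x) ≤ value T γ R π' x := by
  have hgt : Filter.Tendsto (fun t => γ ^ t * ∑ s, visit T π' x t s * value T γ R π s)
      Filter.atTop (nhds 0) := tendsto_expf hT0 hT1 hγ0 hγ1 π' x _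
  have hP : Filter.Tendsto
      (fun n => ∑ t ∈ Finset.range n, γ ^ t * ∑ s, visit T π' x t s * R s (π' s))
      Filter.atTop (nhds (value T γ R π' x)) := by
    have := (summable_expf hT0 hT1 hγ0 hγ1 π' x (fun s => R s (π' s))).hasSum
    exact this.tendsto_sum_nat
  have hQ : Filter.Tendsto
      (fun n => (Qf T γ R π x (π' x) - value T γ R π x)
        + (value T γ R π x - γ ^ n * ∑ s, visit T π' x n s * value T γ R π s))
      Filter.atTop (nhds (Qf T γ R π x (π' x))) := by
    have := (tendsto_const_nhds (x := value T γ R π x) (f := Filter.atTop (α := ℕ))).sub hgt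
    have h2 := (tendsto_const_nhds
      (x := Qf T γ R π x (π' x) - value T γ R π x) (f := Filter.atTop (α := ℕ))).add this
    simpa using h2
  refine le_of_tendsto_of_tendsto hQ hP ?_
  filter_upwards [Filter.eventually_ge_atTop 1] with n hn
  rw [partial_sum_id π π' x n]
  have hterm : ∀ t, 0 ≤ γ ^ t * ∑ s, visit T π' x t s * (Qf T γ R π s (π' s) - value T γ R π s) :=
    fun t => mul_nonneg (pow_nonneg hγ0.le t) (Finset.sum_nonneg fun s _ =>
      mul_nonneg (visit_nonneg hT0 π' x t s) (sub_nonneg.2 (hadv s)))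
  have h0 : (Qf T γ R π x (π' x) - value T γ R π x)
      ≤ ∑ t ∈ Finset.range n,
          γ ^ t * ∑ s, visit T π' x t s * (Qf T γ R π s (π' s) - value T γ R π s) := by
    have hmem : 0 ∈ Finset.range n := Finset.mem_range.2 hn
    have := Finset.single_le_sum (f := fun t =>
      γ ^ t * ∑ s, visit T π' x t s * (Qf T γ R π s (π' s) - value T γ R π s))
      (fun t _ => hterm t) hmem
    simpa [expf_zero] using this
  linarith

lemma optimal_of_greedy (hT0 : ∀ s a s', 0 ≤ T s a s') (hT1 : ∀ s a, ∑ s', T s a s' = 1)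
    (hγ0 : 0 < γ) (hγ1 : γ < 1) (π : S → A)
    (hgr : ∀ s a, Qf T γ R π s a ≤ value T γ R π s) :
    ∀ (π' : S → A) (x : S), value T γ R π' x ≤ value T γ R π x := by
  intro π' x
  have hgt : Filter.Tendsto (fun t => γ ^ t * ∑ s, visit T π' x t s * value T γ R π s)
      Filter.atTop (nhds 0) := tendsto_expf hT0 hT1 hγ0 hγ1 π' x _
  have hP : Filter.Tendsto
      (fun n => ∑ t ∈ Finset.range n, γ ^ t * ∑ s, visit T π' x t s * R s (π' s))
      Filter.atTop (nhds (value T γ R π' x)) := by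
    have := (summable_expf hT0 hT1 hγ0 hγ1 π' x (fun s => R s (π' s))).hasSum
    exact this.tendsto_sum_nat
  have hQ : Filter.Tendsto
      (fun n => value T γ R π x - γ ^ n * ∑ s, visit T π' x n s * value T γ R π s)
      Filter.atTop (nhds (value T γ R π x)) := by
    have := (tendsto_const_nhds (x := value T γ R π x) (f := Filter.atTop (α := ℕ))).sub hgt
    simpa using this
  refine le_of_tendsto_of_tendsto hP hQ ?_
  filter_upwards with n
  rw [partial_sum_id π π' x n]
  have hterm : ∀ t, γ ^ t * ∑ s, visit T π' x t s * (Qf T γ R π s (π' s) - value T γ R π s) ≤ 0 :=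
    fun t => mul_nonpos_of_nonneg_of_nonpos (pow_nonneg hγ0.le t)
      (Finset.sum_nonpos fun s _ => mul_nonpos_of_nonneg_of_nonpos
        (visit_nonneg hT0 π' x t s) (sub_nonpos.2 (hgr s (π' s))))
  have := Finset.sum_nonpos (s := Finset.range n) fun t _ => hterm t
  linarith

end MDP3
/-- `π` is optimal: its value dominates every policy's value at every state. -/
def Optimal {S A : Type} [Fintype S] [DecidableEq S]
    (T : S → A → S → ℝ) (γ : ℝ) (R : S → A → ℝ) (π : S → A) : Prop :=
  ∀ (π' : S → A) (s : S), value T γ R π' s ≤ value T γ R π s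

/-- `p` and `q` differ in exactly one state. -/
def DiffOne {S A : Type} (p q : S → A) : Prop :=
  ∃ s₀ : S, p s₀ ≠ q s₀ ∧ ∀ s : S, s ≠ s₀ → p s = q s

/-- The fringe of `Pg`: policies not in `Pg` that are one single-state modification
away from some policy in `Pg`. -/
def Fringe {S A : Type} (Pg : Set (S → A)) : Set (S → A) :=
  {π' | π' ∉ Pg ∧ ∃ π ∈ Pg, DiffOne π π'}

/-- Fringe separation implies full separation: if every policy of a nonempty set `Pg`
of optimal policies has strictly greater start-state value than every fringe policy,
then every policy in `Pg` has strictly greater start-state value than every policy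
outside `Pg`. -/
theorem fringe_separation_implies_full {S A : Type}
    [Fintype S] [Fintype A] [DecidableEq S]
    (T : S → A → S → ℝ)
    (hT : (∀ s a s', 0 ≤ T s a s') ∧ ∀ s a, ∑ s', T s a s' = 1)
    (γ : ℝ) (hγ0 : 0 < γ) (hγ1 : γ < 1) (R : S → A → ℝ) (s0 : S)
    (Pg : Set (S → A)) (hne : Pg.Nonempty)
    (hopt : ∀ π ∈ Pg, Optimal T γ R π)
    (hfringe : ∀ πg ∈ Pg, ∀ πf ∈ Fringe Pg,
      value T γ R πf s0 < value T γ R πg s0) :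
    ∀ πg ∈ Pg, ∀ πb ∉ Pg, value T γ R πb s0 < value T γ R πg s0 := by
  classical
  obtain ⟨hT0, hT1⟩ := hT
  have hbell : ∀ (π : S → A) (x : S), value T γ R π x = Qf T γ R π x (π x) :=
    bellman hT0 hT1 hγ0 hγ1
  obtain ⟨πg0, hπg0⟩ := hne
  -- Step 1: every optimal policy is in Pg
  have hallopt : ∀ π : S → A, Optimal T γ R π → π ∈ Pg := by
    have key : ∀ n : ℕ, ∀ πs : S → A, Optimal T γ R πs →
        (Finset.univ.filter (fun s => πs s ≠ πg0 s)).card ≤ n → πs ∈ Pg := by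
      intro n
      induction n with
      | zero =>
        intro πs _ hcard
        have hempty : πs = πg0 := funext fun s => by
          by_contra h
          have hmem : s ∈ Finset.univ.filter (fun s => πs s ≠ πg0 s) := by
            simp [h]
          have := Finset.card_pos.2 ⟨s, hmem⟩
          omega
        exact hempty ▸ hπg0
      | succ n ih =>
        intro πs hπs hcard
        by_cases hzero : (Finset.univ.filter (fun s => πs s ≠ πg0 s)).card = 0
        · exact ih πs hπs (by omega)
        obtain ⟨s₁, hs₁mem⟩ := Finset.card_pos.1 (Nat.pos_of_ne_zero hzero)
        have hs₁ : πs s₁ ≠ πg0 s₁ := by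
          simpa using (Finset.mem_filter.1 hs₁mem).2
        set π' := Function.update πs s₁ (πg0 s₁) with hπ'def
        have hvaleq : ∀ x, value T γ R πg0 x = value T γ R πs x :=
          fun x => le_antisymm (hπs πg0 x) (hopt πg0 hπg0 πs x)
        have hadv : ∀ s, value T γ R πg0 s ≤ Qf T γ R πg0 s (π' s) := by
          intro s
          by_cases h : s = s₁
          · subst h
            rw [show π' s = πg0 s from Function.update_self _ _ _, ← hbell πg0 s]
          · rw [show π' s = πs s from Function.update_of_ne h _ _]
            have hQeq : Qf T γ R πg0 s (πs s) = Qf T γ R πs s (πs s) := by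
              simp only [Qf]
              congr 1
              rw [mul_comm, mul_comm γ]
              congr 1
              exact Finset.sum_congr rfl fun s' _ => by rw [hvaleq s']
            rw [hQeq, ← hbell πs s, hvaleq s]
        have hπ'opt : Optimal T γ R π' := by
          intro π'' x
          have h1 : Qf T γ R πg0 x (π' x) ≤ value T γ R π' x :=
            Qf_le_value' hT0 hT1 hγ0 hγ1 πg0 π' hadv x
          have h2 : value T γ R π'' x ≤ value T γ R πg0 x := hopt πg0 hπg0 π'' x
          exact h2.trans ((hadv x).trans h1)
        have hcard' : (Finset.univ.filter (fun s => π' s ≠ πg0 s)).card ≤ n := by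
          have hsub : Finset.univ.filter (fun s => π' s ≠ πg0 s)
              ⊆ (Finset.univ.filter (fun s => πs s ≠ πg0 s)).erase s₁ := by
            intro s hs
            simp only [Finset.mem_filter, Finset.mem_univ, true_and] at hs
            have hne2 : s ≠ s₁ := by
              intro h; subst h
              exact hs (Function.update_self _ _ _)
            rw [Finset.mem_erase]
            refine ⟨hne2, ?_⟩
            simp only [Finset.mem_filter, Finset.mem_univ, true_and]
            intro hc
            exact hs (show π' s = πg0 s by
              rw [hπ'def, Function.update_of_ne hne2]; exact hc)
          have h1 := Finset.card_le_card hsub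
          rw [Finset.card_erase_of_mem hs₁mem] at h1
          omega
        have hπ'Pg : π' ∈ Pg := ih π' hπ'opt hcard'
        by_cases hmem : πs ∈ Pg
        · exact hmem
        · exfalso
          have hdiff : DiffOne π' πs := by
            refine ⟨s₁, ?_, fun s hs => Function.update_of_ne hs _ _⟩
            exact show Function.update πs s₁ (πg0 s₁) s₁ ≠ πs s₁ by
              rw [Function.update_self]; exact Ne.symm hs₁
          have hfr : πs ∈ Fringe Pg := ⟨hmem, π', hπ'Pg, hdiff⟩
          have h3 := hfringe πg0 hπg0 πs hfr
          have h4 := hπs πg0 s0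
          linarith
    exact fun π hπ => key _ π hπ le_rfl
  -- Step 2: improvement chain
  have chain : ∀ n : ℕ, ∀ π : S → A,
      (Finset.univ.filter
        (fun π'' => ∑ s, value T γ R π s < ∑ s, value T γ R π'' s)).card ≤ n →
      π ∉ Pg → ∃ πf ∈ Fringe Pg, value T γ R π s0 ≤ value T γ R πf s0 := by
    intro n
    induction n with
    | zero =>
      intro π hcard hπ
      by_cases himp : ∃ s a, value T γ R π s < Qf T γ R π s a
      · obtain ⟨s, a, hlt⟩ := himp
        have hne' : π s ≠ a := by
          intro h
          rw [← h, ← hbell π s] at hlt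
          exact lt_irrefl _ hlt
        set π' := Function.update π s a with hπ'def
        have hadv : ∀ s', value T γ R π s' ≤ Qf T γ R π s' (π' s') := by
          intro s'
          by_cases h : s' = s
          · subst h
            rw [show π' s' = a from Function.update_self _ _ _]
            exact hlt.le
          · rw [show π' s' = π s' from Function.update_of_ne h _ _, ← hbell]
        have hmono : ∀ x, value T γ R π x ≤ value T γ R π' x :=
          fun x => (hadv x).trans (Qf_le_value' hT0 hT1 hγ0 hγ1 π π' hadv x)
        have hstrict : value T γ R π s < value T γ R π' s := by
          have h1 := Qf_le_value' hT0 hT1 hγ0 hγ1 π π' hadv s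
          rw [show π' s = a from Function.update_self _ _ _] at h1
          exact lt_of_lt_of_le hlt h1
        by_cases hmem : π' ∈ Pg
        · refine ⟨π, ⟨hπ, π', hmem, s, ?_, fun s' hs' => Function.update_of_ne hs' _ _⟩, le_rfl⟩
          exact show Function.update π s a s ≠ π s by
            rw [Function.update_self]; exact Ne.symm hne'
        · exfalso
          have hWlt : ∑ x, value T γ R π x < ∑ x, value T γ R π' x :=
            Finset.sum_lt_sum (fun i _ => hmono i) ⟨s, Finset.mem_univ s, hstrict⟩
          have hmem' : π' ∈ Finset.univ.filter
              (fun π'' => ∑ x, value T γ R π x < ∑ x, value T γ R π'' x) := by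
            simp [hWlt]
          have := Finset.card_pos.2 ⟨π', hmem'⟩
          omega
      · push_neg at himp
        exact absurd (hallopt π (optimal_of_greedy hT0 hT1 hγ0 hγ1 π himp)) hπ
    | succ n ih =>
      intro π hcard hπ
      by_cases himp : ∃ s a, value T γ R π s < Qf T γ R π s a
      · obtain ⟨s, a, hlt⟩ := himp
        have hne' : π s ≠ a := by
          intro h
          rw [← h, ← hbell π s] at hlt
          exact lt_irrefl _ hlt
        set π' := Function.update π s a with hπ'def
        have hadv : ∀ s', value T γ R π s' ≤ Qf T γ R π s' (π' s') := by
          intro s'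
          by_cases h : s' = s
          · subst h
            rw [show π' s' = a from Function.update_self _ _ _]
            exact hlt.le
          · rw [show π' s' = π s' from Function.update_of_ne h _ _, ← hbell]
        have hmono : ∀ x, value T γ R π x ≤ value T γ R π' x :=
          fun x => (hadv x).trans (Qf_le_value' hT0 hT1 hγ0 hγ1 π π' hadv x)
        have hstrict : value T γ R π s < value T γ R π' s := by
          have h1 := Qf_le_value' hT0 hT1 hγ0 hγ1 π π' hadv s
          rw [show π' s = a from Function.update_self _ _ _] at h1
          exact lt_of_lt_of_le hlt h1
        by_cases hmem : π' ∈ Pg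
        · refine ⟨π, ⟨hπ, π', hmem, s, ?_, fun s' hs' => Function.update_of_ne hs' _ _⟩, le_rfl⟩
          exact show Function.update π s a s ≠ π s by
            rw [Function.update_self]; exact Ne.symm hne'
        · have hWlt : ∑ x, value T γ R π x < ∑ x, value T γ R π' x :=
            Finset.sum_lt_sum (fun i _ => hmono i) ⟨s, Finset.mem_univ s, hstrict⟩
          have hss : Finset.univ.filter
                (fun π'' => ∑ x, value T γ R π' x < ∑ x, value T γ R π'' x)
              ⊂ Finset.univ.filter
                (fun π'' => ∑ x, value T γ R π x < ∑ x, value T γ R π'' x) := by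
            refine Finset.ssubset_iff_of_subset ?_ |>.2 ?_
            · intro π'' hp
              simp only [Finset.mem_filter, Finset.mem_univ, true_and] at hp ⊢
              exact hWlt.trans hp
            · exact ⟨π', by simp [hWlt], by simp⟩
          have hlt' := Finset.card_lt_card hss
          obtain ⟨πf, hπf, hle⟩ := ih π' (by omega) hmem
          exact ⟨πf, hπf, (hmono s0).trans hle⟩
      · push_neg at himp
        exact absurd (hallopt π (optimal_of_greedy hT0 hT1 hγ0 hγ1 π himp)) hπ
  intro πg hπg πb hπb
  obtain ⟨πf, hπf, hle⟩ := chain _ πb le_rfl hπb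
  exact lt_of_le_of_lt hle (hfringe πg hπg πf hπf)
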